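/- For every infinite cardinal κ₀ there exists a cardinal κ with κ₀ < κ ≤ 2^{κ₀} such that either κ is a successor cardinal κ = θ⁺ with 2^θ < 2^{θ⁺}, or κ is weakly inaccessible but not strongly inaccessible. -/

import Mathlib

open Cardinal Set

/-- If `θ` is a singular infinite cardinal and `2 ^ μ ≤ 2 ^ κ₀` for all `μ < θ`,
then `2 ^ θ ≤ 2 ^ κ₀`. -/
theorem aux_two_power_le_of_singular {κ₀ : Cardinal} (hκ₀ : ℵ₀ ≤ κ₀) :
    ∀ {θ : Cardinal}, ℵ₀ ≤ θ → (∀ μ < θ, (2 : Cardinal) ^ μ ≤ 2 ^ κ₀) →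
      θ.ord.cof < θ → (2 : Cardinal) ^ θ ≤ 2 ^ κ₀ := by
  intro θ
  induction θ using Cardinal.inductionOn with
  | _ α =>
  intro hθ hmin hsing
  rcases ord_eq α with ⟨r, wo, re⟩
  have hlim := isSuccLimit_ord hθ
  rw [re] at hlim
  rcases Ordinal.cof_eq' r hlim with ⟨S, H, Se⟩
  -- `#α` is at most the sum over `a ∈ S` of the cardinals of the initial segments below `a`
  have hsum : #α ≤ Cardinal.sum fun a : S => #{ x // r x a } := by
    rw [← mk_sigma]
    refine ⟨Function.Embedding.ofSurjective (fun x => x.2.1) fun a => ?_⟩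
    obtain ⟨b, hb, ab⟩ := H a
    exact ⟨⟨⟨_, hb⟩, _, ab⟩, rfl⟩
  have hseg : ∀ a : S, #{ x // r x a } < #α := by
    intro i
    have := Ordinal.typein_lt_type r i
    rwa [← re, lt_ord] at this
  have hcof : ℵ₀ ≤ Ordinal.cof (Ordinal.type r) := by
    rw [← re]
    exact Ordinal.aleph0_le_cof.2 (isSuccLimit_ord hθ)
  calc (2 : Cardinal) ^ #α ≤ 2 ^ Cardinal.sum fun a : S => #{ x // r x a } :=
        power_le_power_left two_ne_zero hsum
    _ = Cardinal.prod fun a : S => (2 : Cardinal) ^ #{ x // r x a } := power_sum 2 _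
    _ ≤ Cardinal.prod fun _ : S => (2 : Cardinal) ^ κ₀ :=
        prod_le_prod _ _ fun a => hmin _ (hseg a)
    _ = ((2 : Cardinal) ^ κ₀) ^ #S := prod_const' S _
    _ = (2 : Cardinal) ^ (κ₀ * #S) := by rw [power_mul]
    _ ≤ 2 ^ κ₀ := by
        rw [Se, mul_eq_max hκ₀ hcof]
        rcases max_cases κ₀ (Ordinal.cof (Ordinal.type r)) with ⟨h, _⟩ | ⟨h, _⟩
        · rw [h]
        · rw [h]
          refine hmin _ ?_
          rw [← re]
          exact hsing
  -- (end of calc)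

/-- For every infinite cardinal `κ₀` there exists a cardinal `κ` with
`κ₀ < κ ≤ 2 ^ κ₀` such that either `κ` is a successor cardinal `θ⁺` with
`2 ^ θ < 2 ^ θ⁺`, or `κ` is weakly inaccessible (an uncountable regular limit
cardinal) but not strongly inaccessible (i.e. not a strong limit cardinal). -/
theorem exists_successor_or_weaklyInaccessible (κ₀ : Cardinal) (hκ₀ : ℵ₀ ≤ κ₀) :
    ∃ κ : Cardinal, κ₀ < κ ∧ κ ≤ 2 ^ κ₀ ∧
      ((∃ θ : Cardinal, κ = Order.succ θ ∧ (2 : Cardinal) ^ θ < 2 ^ Order.succ θ) ∨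
        (ℵ₀ < κ ∧ κ.IsRegular ∧ (∀ θ : Cardinal, κ ≠ Order.succ θ) ∧
          ¬ κ.IsStrongLimit)) := by
  set Λ : Cardinal := 2 ^ κ₀ with hΛdef
  set T : Set Cardinal := { θ | Λ < 2 ^ θ } with hTdef
  have hΛT : Λ ∈ T := cantor Λ
  set θ : Cardinal := sInf T with hθdef
  have hθT : θ ∈ T := csInf_mem ⟨Λ, hΛT⟩
  have hθle : θ ≤ Λ := csInf_le' hΛT
  have hmin : ∀ μ < θ, (2 : Cardinal) ^ μ ≤ Λ := by
    intro μ hμ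
    have : μ ∉ T := notMem_of_lt_csInf hμ (OrderBot.bddBelow T)
    exact not_lt.1 this
  have hκ₀θ : κ₀ < θ := by
    by_contra hc
    push_neg at hc
    exact absurd hθT (not_lt.2 (power_le_power_left two_ne_zero hc))
  have hℵ₀θ : ℵ₀ < θ := hκ₀.trans_lt hκ₀θ
  by_cases h : ∃ μ : Cardinal, θ = Order.succ μ
  · obtain ⟨μ, hμ⟩ := h
    refine ⟨θ, hκ₀θ, hθle, Or.inl ⟨μ, hμ, ?_⟩⟩
    have hμθ : μ < θ := hμ ▸ Order.lt_succ μ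
    rw [← hμ]
    exact (hmin μ hμθ).trans_lt hθT
  · refine ⟨θ, hκ₀θ, hθle, Or.inr ⟨hℵ₀θ, ⟨hℵ₀θ.le, ?_⟩, fun μ hμ => h ⟨μ, hμ⟩, ?_⟩⟩
    · by_contra hc
      push_neg at hc
      exact absurd hθT
        (not_lt.2 (aux_two_power_le_of_singular hκ₀ hℵ₀θ.le hmin hc))
    · intro hs
      exact absurd (hs.two_power_lt hκ₀θ) (not_lt.2 hθle)
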